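/- Let a, p be reals with 0 < a \leq p. Then \int_0^\infty ( e^{-u}/(u(1-e^{-pu/a})) - (a/p)u^{-2} - (1/2 - a/p) e^{-u}/u ) du = \log\Gamma(a/p) + (1/2 - a/p)\log(a/p) - (1/2)\log(2\pi). -/

import Mathlib

open Real MeasureTheory Set Filter Topology Nat

noncomputable section
namespace BinetAux

lemma hasDerivAt_expneg (t : ℝ) : HasDerivAt (fun t : ℝ => exp (-t)) (-exp (-t)) t := by
  exact ((Real.hasDerivAt_exp (-t)).comp t ((hasDerivAt_id t).neg)).congr_deriv (by simp)

lemma one_sub_le_expneg (t : ℝ) : 1 - t ≤ exp (-t) := by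
  have := Real.add_one_le_exp (-t); linarith

lemma expneg_le_one_sub_add (t : ℝ) (ht : 0 ≤ t) : exp (-t) ≤ 1 - t + t ^ 2 / 2 := by
  set f : ℝ → ℝ := fun t => 1 - t + t ^ 2 / 2 - exp (-t) with hf
  have hd : ∀ s : ℝ, HasDerivAt f (-1 + s + exp (-s)) s := by
    intro s
    have h1 : HasDerivAt (fun t : ℝ => 1 - t + t ^ 2 / 2) (-1 + s) s := by
      have := ((hasDerivAt_const s (1:ℝ)).sub (hasDerivAt_id s)).add
        ((hasDerivAt_pow 2 s).div_const 2)
      refine this.congr_deriv ?_; push_cast; ring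
    have := h1.sub (hasDerivAt_expneg s)
    refine this.congr_deriv ?_; ring
  have hmono : MonotoneOn f (Ici 0) := by
    apply monotoneOn_of_deriv_nonneg (convex_Ici 0)
    · exact fun s _ => (hd s).continuousAt.continuousWithinAt
    · exact fun s _ => ((hd s).differentiableAt).differentiableWithinAt
    · intro s hs
      rw [(hd s).deriv]
      have := one_sub_le_expneg s
      linarith
  have := hmono (self_mem_Ici) ht ht
  simp only [hf] at this
  simp only [neg_zero, exp_zero] at this
  nlinarith [this]

lemma cubic_le_expneg (t : ℝ) (ht : 0 ≤ t) : 1 - t + t ^ 2 / 2 - t ^ 3 / 6 ≤ exp (-t) := by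
  set f : ℝ → ℝ := fun t => exp (-t) - (1 - t + t ^ 2 / 2 - t ^ 3 / 6) with hf
  have hd : ∀ s : ℝ, HasDerivAt f (-exp (-s) + 1 - s + s ^ 2 / 2) s := by
    intro s
    have h1 : HasDerivAt (fun t : ℝ => 1 - t + t ^ 2 / 2 - t ^ 3 / 6) (-1 + s - s ^ 2 / 2) s := by
      have := (((hasDerivAt_const s (1:ℝ)).sub (hasDerivAt_id s)).add
        ((hasDerivAt_pow 2 s).div_const 2)).sub ((hasDerivAt_pow 3 s).div_const 6)
      refine this.congr_deriv ?_; push_cast; ring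
    have := (hasDerivAt_expneg s).sub h1
    refine this.congr_deriv ?_; ring
  have hmono : MonotoneOn f (Ici 0) := by
    apply monotoneOn_of_deriv_nonneg (convex_Ici 0)
    · exact fun s _ => (hd s).continuousAt.continuousWithinAt
    · exact fun s _ => ((hd s).differentiableAt).differentiableWithinAt
    · intro s hs
      rw [(hd s).deriv]
      have hs0 : (0:ℝ) ≤ s := le_of_lt (by simpa using hs)
      have := expneg_le_one_sub_add s hs0
      linarith
  have := hmono (self_mem_Ici) ht ht
  simp only [hf, neg_zero, exp_zero] at this
  nlinarith [this]

lemma one_sub_expneg_le (t : ℝ) (ht : 0 ≤ t) : 1 - exp (-t) ≤ t := by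
  have := one_sub_le_expneg t; linarith

lemma add_one_mul_expneg_le_one (t : ℝ) : (1 + t) * exp (-t) ≤ 1 := by
  have h := Real.add_one_le_exp t
  have h2 : (1 + t) * exp (-t) ≤ exp t * exp (-t) := by
    apply mul_le_mul_of_nonneg_right (by linarith) (exp_pos _).le
  rwa [← Real.exp_add, add_neg_cancel, Real.exp_zero] at h2

lemma mul_expneg_le_one_sub (t : ℝ) : t * exp (-t) ≤ 1 - exp (-t) := by
  have := add_one_mul_expneg_le_one t; nlinarith [exp_pos (-t)]

lemma one_sub_expneg_pos {t : ℝ} (ht : 0 < t) : 0 < 1 - exp (-t) := by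
  have : exp (-t) < exp 0 := Real.exp_lt_exp.2 (by linarith)
  simpa using this

lemma expneg_le_one (t : ℝ) (ht : 0 ≤ t) : exp (-t) ≤ 1 := by
  simpa using Real.exp_le_exp.2 (neg_nonpos.2 ht)

lemma abs_expneg_sub_expneg_le {s t : ℝ} (hs : 0 ≤ s) (ht : 0 ≤ t) :
    |exp (-s) - exp (-t)| ≤ |s - t| := by
  wlog h : t ≤ s generalizing s t
  · rw [abs_sub_comm, abs_sub_comm s t]; exact this ht hs (le_of_not_ge h)
  have h1 : exp (-s) ≤ exp (-t) := Real.exp_le_exp.2 (by linarith)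
  rw [abs_of_nonpos (by linarith), abs_of_nonneg (by linarith)]
  have : exp (-t) - exp (-s) = exp (-t) * (1 - exp (-(s - t))) := by
    rw [mul_sub, mul_one, ← Real.exp_add]; ring_nf
  rw [neg_sub, this]
  calc exp (-t) * (1 - exp (-(s - t))) ≤ 1 * (s - t) := by
        apply mul_le_mul (expneg_le_one t ht) (one_sub_expneg_le _ (by linarith))
          (by have := expneg_le_one (s-t) (by linarith); linarith) zero_le_one
    _ = s - t := one_mul _

def fr (x v : ℝ) : ℝ := (exp (-v) - exp (-(x*v)))/v

def mal (x v : ℝ) : ℝ := ((x-1)*exp (-v) + (exp (-(x*v)) - exp (-v))/(1 - exp (-v)))/v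

def cc (v : ℝ) : ℝ := (exp (-v)/(1 - exp (-v)) - 1/v + exp (-v)/2)/v

def qq (v : ℝ) : ℝ := cc v + (1 - exp (-v))/(2*v)

def dd (x v : ℝ) : ℝ := (exp (-(x*v)) - 1)/v^2 + x * exp (-(x*v))/v

def rr (x v : ℝ) : ℝ := ((exp (-v) - exp (-((x+1)*v)))/(1 - exp (-v)) - x)/v

lemma ne_zero_of_Ioi {v : ℝ} (hv : v ∈ Ioi (0:ℝ)) : v ≠ 0 := ne_of_gt hv

lemma one_sub_ne {v : ℝ} (hv : v ∈ Ioi (0:ℝ)) : 1 - exp (-v) ≠ 0 :=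
  (one_sub_expneg_pos hv).ne'

lemma cont_expneg_mul (x : ℝ) : Continuous fun v : ℝ => exp (-(x*v)) := by fun_prop

lemma contOn_fr (x : ℝ) : ContinuousOn (fr x) (Ioi 0) := by
  apply ContinuousOn.div (by fun_prop) continuousOn_id
  exact fun v hv => ne_zero_of_Ioi hv

lemma contOn_mal (x : ℝ) : ContinuousOn (mal x) (Ioi 0) := by
  apply ContinuousOn.div _ continuousOn_id (fun v hv => ne_zero_of_Ioi hv)
  apply ContinuousOn.add (by fun_prop)
  exact ContinuousOn.div (by fun_prop) (by fun_prop) (fun v hv => one_sub_ne hv)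

lemma contOn_cc : ContinuousOn cc (Ioi 0) := by
  apply ContinuousOn.div _ continuousOn_id (fun v hv => ne_zero_of_Ioi hv)
  apply ContinuousOn.add
  apply ContinuousOn.sub
  · exact ContinuousOn.div (by fun_prop) (by fun_prop) (fun v hv => one_sub_ne hv)
  · exact ContinuousOn.div (by fun_prop) continuousOn_id (fun v hv => ne_zero_of_Ioi hv)
  · fun_prop

lemma contOn_qq : ContinuousOn qq (Ioi 0) := by
  apply contOn_cc.add
  apply ContinuousOn.div (by fun_prop) (by fun_prop)
  intro v hv; have := ne_zero_of_Ioi hv; positivity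

lemma contOn_dd (x : ℝ) : ContinuousOn (dd x) (Ioi 0) := by
  apply ContinuousOn.add
  · apply ContinuousOn.div (by fun_prop) (by fun_prop)
    intro v hv; have := ne_zero_of_Ioi hv; positivity
  · exact ContinuousOn.div (by fun_prop) continuousOn_id (fun v hv => ne_zero_of_Ioi hv)

lemma contOn_rr (x : ℝ) : ContinuousOn (rr x) (Ioi 0) := by
  apply ContinuousOn.div _ continuousOn_id (fun v hv => ne_zero_of_Ioi hv)
  apply ContinuousOn.sub _ (by fun_prop)
  exact ContinuousOn.div (by fun_prop) (by fun_prop) (fun v hv => one_sub_ne hv)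

lemma integrableOn_Ioi_zero {f : ℝ → ℝ} (hf : ContinuousOn f (Ioi 0))
    {C : ℝ} (h1 : ∀ v ∈ Ioc (0:ℝ) 1, |f v| ≤ C)
    {g : ℝ → ℝ} (hg : IntegrableOn g (Ioi 1)) (h2 : ∀ v ∈ Ioi (1:ℝ), |f v| ≤ g v) :
    IntegrableOn f (Ioi 0) := by
  rw [show Ioi (0:ℝ) = Ioc 0 1 ∪ Ioi 1 from (Ioc_union_Ioi_eq_Ioi zero_le_one).symm]
  apply IntegrableOn.union
  · apply Integrable.mono' (g := fun _ => C)
    · exact integrableOn_const measure_Ioc_lt_top.ne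
    · exact (hf.mono Ioc_subset_Ioi_self).aestronglyMeasurable measurableSet_Ioc
    · exact (ae_restrict_iff' measurableSet_Ioc).2 (ae_of_all _ h1)
  · apply Integrable.mono' hg
    · exact (hf.mono (Ioi_subset_Ioi zero_le_one)).aestronglyMeasurable measurableSet_Ioi
    · exact (ae_restrict_iff' measurableSet_Ioi).2 (ae_of_all _ h2)

lemma integrableOn_expneg_mul {c : ℝ} (hc : 0 < c) (C : ℝ) :
    IntegrableOn (fun v : ℝ => C * exp (-(c*v))) (Ioi 1) := by
  have := (exp_neg_integrableOn_Ioi 1 hc).const_mul C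
  simp only [neg_mul] at this; exact this

lemma integrableOn_inv_sq : IntegrableOn (fun v : ℝ => v⁻¹^2) (Ioi 1) := by
  have := integrableOn_Ioi_rpow_of_lt (a := -2) (by norm_num) (c := 1) one_pos
  apply this.congr_fun _ measurableSet_Ioi
  intro v hv
  have hv0 : (0:ℝ) < v := lt_trans one_pos hv
  simp only []
  rw [show ((-2:ℝ) = ((-2:ℤ):ℝ)) by norm_num, rpow_intCast, zpow_neg, ← inv_zpow]
  norm_cast

lemma integral_expneg_mul {c : ℝ} (hc : 0 < c) :
    ∫ v in Ioi (0:ℝ), exp (-(c*v)) = 1/c := by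
  have h := integral_comp_mul_left_Ioi (fun u => exp (-u)) 0 hc
  simp only [mul_zero, integral_exp_neg_Ioi, neg_zero, exp_zero, smul_eq_mul, mul_one] at h
  rw [h]; rw [one_div]

lemma integrableOn_fr {x : ℝ} (hx : 0 < x) : IntegrableOn (fr x) (Ioi 0) := by
  apply integrableOn_Ioi_zero (contOn_fr x) (C := |1 - x|)
    (g := fun v => 1 * exp (-(1*v)) + 1 * exp (-(x*v)))
  · intro v hv
    have hv0 : 0 < v := hv.1
    rw [fr, abs_div, abs_of_pos hv0, div_le_iff₀ hv0]
    calc |exp (-v) - exp (-(x*v))| ≤ |v - x*v| :=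
          abs_expneg_sub_expneg_le hv0.le (by positivity)
      _ = |1-x| * v := by rw [show v - x*v = (1-x)*v by ring, abs_mul, abs_of_pos hv0]
  · exact (integrableOn_expneg_mul one_pos 1).add (integrableOn_expneg_mul hx 1)
  · intro v hv
    have hv1 : (1:ℝ) < v := hv
    have hv0 : (0:ℝ) < v := lt_trans one_pos hv1
    rw [fr, abs_div, abs_of_pos hv0]
    have h1 : |exp (-v) - exp (-(x*v))| ≤ exp (-v) + exp (-(x*v)) := by
      have := abs_sub (exp (-v)) (exp (-(x*v)))
      rw [abs_of_pos (exp_pos _), abs_of_pos (exp_pos _)] at this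
      exact this
    have h2 : |exp (-v) - exp (-(x*v))| / v ≤ (exp (-v) + exp (-(x*v))) / 1 := by
      apply div_le_div₀ (by positivity) h1 one_pos hv1.le
    simpa [one_mul] using h2

lemma hasDerivAt_integral_fr {x : ℝ} (hx : 0 < x) :
    HasDerivAt (fun y => ∫ v in Ioi (0:ℝ), fr y v) x⁻¹ x := by
  have hball : ∀ y ∈ Metric.ball x (x/2), x/2 < y := by
    intro y hy
    rw [Metric.mem_ball, Real.dist_eq, abs_lt] at hy
    linarith [hy.1]
  have key := hasDerivAt_integral_of_dominated_loc_of_deriv_le (μ := volume.restrict (Ioi 0))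
    (F := fun y v => fr y v) (F' := fun y v => exp (-(y*v))) (x₀ := x)
    (bound := fun v => exp (-(x/2*v))) (Metric.ball_mem_nhds x (half_pos hx))
    (Eventually.of_forall fun y =>
      (contOn_fr y).aestronglyMeasurable measurableSet_Ioi)
    (integrableOn_fr hx)
    (Continuous.aestronglyMeasurable (by fun_prop))
    ?_ ?_ ?_
  · have : ∫ v in Ioi (0:ℝ), exp (-(x*v)) = x⁻¹ := by
      have h := integral_comp_mul_left_Ioi (fun u => exp (-u)) 0 hx
      simpa [integral_exp_neg_Ioi, integral_exp_Iic_zero] using h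
    rw [← this]; exact key.2
  · rw [ae_restrict_iff' measurableSet_Ioi]
    apply ae_of_all
    intro v hv y hy
    have hv0 : (0:ℝ) < v := hv
    rw [Real.norm_eq_abs, abs_of_pos (exp_pos _)]
    apply exp_le_exp.2
    have := hball y hy
    nlinarith
  · have := exp_neg_integrableOn_Ioi 0 (half_pos hx)
    apply Integrable.congr this
    apply ae_of_all; intro v; simp only [neg_mul]
  · rw [ae_restrict_iff' measurableSet_Ioi]
    apply ae_of_all
    intro v hv y _
    have hv0 : (0:ℝ) < v := hv
    have h1 : HasDerivAt (fun y : ℝ => exp (-(y*v))) (-v * exp (-(y*v))) y := by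
      have h0 : HasDerivAt (fun y : ℝ => -(y*v)) (-v) y := (hasDerivAt_mul_const v).neg
      refine ((Real.hasDerivAt_exp (-(y*v))).comp y h0).congr_deriv ?_; ring
    have h2 := ((hasDerivAt_const y (exp (-v))).sub h1).div_const v
    refine h2.congr_deriv ?_
    field_simp
    ring

lemma integral_fr {x : ℝ} (hx : 0 < x) : ∫ v in Ioi (0:ℝ), fr x v = log x := by
  set F : ℝ → ℝ := fun y => ∫ v in Ioi (0:ℝ), fr y v with hF
  have hsub : uIcc 1 x ⊆ Ioi (0:ℝ) := by
    intro t ht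
    rcases le_total 1 x with h | h
    · rw [uIcc_of_le h] at ht; exact lt_of_lt_of_le one_pos ht.1
    · rw [uIcc_of_ge h] at ht; exact lt_of_lt_of_le hx ht.1
  have hderiv : ∀ t ∈ uIcc 1 x, HasDerivAt F t⁻¹ t := fun t ht =>
    hasDerivAt_integral_fr (hsub ht)
  have hint : IntervalIntegrable (fun t : ℝ => t⁻¹) volume 1 x := by
    apply ContinuousOn.intervalIntegrable
    exact continuousOn_inv₀.mono (fun t ht => ne_of_gt (hsub ht))
  have := intervalIntegral.integral_eq_sub_of_hasDerivAt hderiv hint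
  have hinv : ∫ t in (1:ℝ)..x, t⁻¹ = log x := by
    rw [integral_inv (fun h => lt_irrefl (0:ℝ) (hsub h))]
    simp
  have hF1 : F 1 = 0 := by
    show (∫ v in Ioi (0:ℝ), fr 1 v) = 0
    have : ∀ v ∈ Ioi (0:ℝ), fr 1 v = 0 := by
      intro v _; simp [fr]
    rw [setIntegral_congr_fun measurableSet_Ioi this]
    simp
  rw [hinv, hF1, sub_zero] at this
  exact this.symm

lemma dd_abs_le {x : ℝ} (hx : 0 < x) {v : ℝ} (hv : 0 < v) : |dd x v| ≤ x^2 := by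
  have h0 : (0:ℝ) ≤ x*v := by positivity
  have h1 := one_sub_le_expneg (x*v)
  have h2 := expneg_le_one_sub_add (x*v) h0
  have h3 : dd x v = (x*v*exp (-(x*v)) - (1 - exp (-(x*v))))/v^2 := by
    rw [dd]; field_simp; ring
  have he : exp (-(x*v)) ≤ 1 := expneg_le_one _ h0
  have hvv : 0 ≤ x * v * exp (-(x*v)) := by positivity
  rw [h3, abs_div, abs_of_pos (by positivity : (0:ℝ) < v^2), div_le_iff₀ (by positivity)]
  rw [abs_le]
  constructor
  · nlinarith [mul_nonneg h0 h0]
  · nlinarith [mul_nonneg h0 h0]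

lemma integrableOn_dd {x : ℝ} (hx : 0 < x) : IntegrableOn (dd x) (Ioi 0) := by
  refine integrableOn_Ioi_zero (contOn_dd x) (C := x^2)
    (g := fun v => v⁻¹^2 + x * exp (-(x*v))) ?_ ?_ ?_
  · exact fun v hv => dd_abs_le hx hv.1
  · exact integrableOn_inv_sq.add (integrableOn_expneg_mul hx x)
  · intro v hv
    have hv1 : (1:ℝ) < v := hv
    have hv0 : (0:ℝ) < v := lt_trans one_pos hv1
    have h0 : (0:ℝ) ≤ x*v := by positivity
    apply (abs_add_le _ _).trans
    apply _root_.add_le_add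
    · rw [abs_div, abs_of_pos (by positivity : (0:ℝ) < v^2)]
      rw [div_le_iff₀ (by positivity)]
      have : |exp (-(x*v)) - 1| ≤ 1 := by
        rw [abs_le]
        constructor
        · have := exp_pos (-(x*v)); linarith
        · have := expneg_le_one (x*v) h0; linarith
      calc |exp (-(x*v)) - 1| ≤ 1 := this
        _ ≤ v⁻¹^2 * v^2 := by rw [← mul_pow, inv_mul_cancel₀ hv0.ne']; norm_num
    · rw [abs_div, abs_of_pos hv0, abs_of_pos (by positivity : 0 < x * exp (-(x*v)))]
      rw [div_le_iff₀ hv0]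
      nlinarith [mul_nonneg hx.le (exp_pos (-(x*v))).le]

lemma hasDerivAt_expneg_mul (x v : ℝ) :
    HasDerivAt (fun v : ℝ => exp (-(x*v))) (-x * exp (-(x*v))) v := by
  have h0 : HasDerivAt (fun v : ℝ => -(x*v)) (-x) v := by
    refine ((hasDerivAt_id v).const_mul x).neg.congr_deriv ?_; simp
  refine ((Real.hasDerivAt_exp (-(x*v))).comp v h0).congr_deriv ?_; ring

lemma integral_dd {x : ℝ} (hx : 0 < x) : ∫ v in Ioi (0:ℝ), dd x v = -x := by
  set f : ℝ → ℝ := fun v => 1 - exp (-(x*v)) with hf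
  set G : ℝ → ℝ := fun v => if v = 0 then x else f v / v with hG
  have hGne : ∀ v : ℝ, v ≠ 0 → G v = f v / v := by
    intro v hv; simp [hG, hv]
  have hDf : ∀ v : ℝ, HasDerivAt f (x * exp (-(x*v))) v := by
    intro v
    have := (hasDerivAt_const v (1:ℝ)).sub (hasDerivAt_expneg_mul x v)
    refine this.congr_deriv ?_; ring
  have hDG : ∀ v ∈ Ioi (0:ℝ), HasDerivAt G (dd x v) v := by
    intro v hv
    have hv0 : (0:ℝ) < v := hv
    have h2 := (hDf v).div (hasDerivAt_id v) hv0.ne'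
    have h3 : HasDerivAt (fun w => f w / w) (dd x v) v := by
      refine h2.congr_deriv ?_
      rw [dd, hf, id_eq]; field_simp; ring
    apply h3.congr_of_eventuallyEq
    filter_upwards [eventually_ne_nhds hv0.ne'] with w hw
    exact hGne w hw
  have hc : ContinuousWithinAt G (Ici 0) 0 := by
    have hD0 : HasDerivAt f x 0 := by simpa using hDf 0
    rw [hasDerivAt_iff_tendsto_slope] at hD0
    have hslope : Tendsto G (𝓝[>] (0:ℝ)) (𝓝 x) := by
      apply Tendsto.congr' _ (hD0.mono_left (nhdsWithin_mono _ (fun w hw => ne_of_gt hw)))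
      filter_upwards [self_mem_nhdsWithin] with w hw
      have hw0 : (0:ℝ) < w := hw
      rw [slope_def_field, hGne w hw0.ne']
      have : f 0 = 0 := by simp [hf]
      rw [this]
      ring
    rw [← Set.Ioi_insert, continuousWithinAt_insert_self]
    unfold ContinuousWithinAt
    rw [show G 0 = x from if_pos rfl]
    exact hslope
  have hlim : Tendsto G atTop (𝓝 0) := by
    have hexp : Tendsto (fun v : ℝ => exp (-x*v)) atTop (𝓝 0) :=
      tendsto_exp_atBot.comp (tendsto_id.const_mul_atTop_of_neg (by linarith))
    have h1 : Tendsto (fun v : ℝ => f v * v⁻¹) atTop (𝓝 ((1 - 0) * 0)) := by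
      apply Tendsto.mul _ tendsto_inv_atTop_zero
      apply Tendsto.sub tendsto_const_nhds
      simpa [neg_mul] using hexp
    rw [show ((1:ℝ) - 0) * 0 = 0 by ring] at h1
    apply Tendsto.congr' _ h1
    filter_upwards [eventually_gt_atTop (0:ℝ)] with w hw
    rw [hGne w hw.ne', div_eq_mul_inv]
  have := integral_Ioi_of_hasDerivAt_of_tendsto hc hDG (integrableOn_dd hx) hlim
  rw [this, show G 0 = x from if_pos rfl, zero_sub]

lemma P_abs_le {v : ℝ} (hv : 0 < v) (hv1 : v ≤ 1) :
    |(1+v) * exp (-v) - 1 + (v/2) * exp (-v) * (1 - exp (-v))| ≤ v^3 := by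
  set E := exp (-v) with hE
  have hEsq : exp (-(2*v)) = E^2 := by
    rw [hE, show -(2*v) = -v + -v by ring, Real.exp_add, sq]
  have h1 : E ≤ 1 - v + v^2/2 := expneg_le_one_sub_add v hv.le
  have h2 : 1 - v + v^2/2 - v^3/6 ≤ E := cubic_le_expneg v hv.le
  have h3 : E^2 ≤ 1 - 2*v + (2*v)^2/2 := by
    rw [← hEsq]; exact expneg_le_one_sub_add (2*v) (by positivity)
  have h4 : 1 - 2*v + (2*v)^2/2 - (2*v)^3/6 ≤ E^2 := by
    rw [← hEsq]; exact cubic_le_expneg (2*v) (by positivity)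
  rw [abs_le]
  constructor <;> nlinarith [sq_nonneg v, sq_nonneg (v-1), hv.le]

lemma cc_eq {v : ℝ} (hv : 0 < v) :
    cc v = ((1+v) * exp (-v) - 1 + (v/2) * exp (-v) * (1 - exp (-v)))
      / (v^2 * (1 - exp (-v))) := by
  rw [cc]
  have h1 : (1:ℝ) - exp (-v) ≠ 0 := (one_sub_expneg_pos hv).ne'
  field_simp
  ring

lemma cc_abs_le_small {v : ℝ} (hv : 0 < v) (hv1 : v ≤ 1) : |cc v| ≤ exp 1 := by
  have hden : 0 < v^2 * (1 - exp (-v)) := by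
    have := one_sub_expneg_pos hv; positivity
  rw [cc_eq hv, abs_div, abs_of_pos hden, div_le_iff₀ hden]
  calc |(1+v) * exp (-v) - 1 + (v/2) * exp (-v) * (1 - exp (-v))| ≤ v^3 := P_abs_le hv hv1
    _ ≤ exp 1 * (v^2 * (1 - exp (-v))) := by
        have he1 : exp (-1:ℝ) ≤ exp (-v) := exp_le_exp.2 (by linarith)
        have h5 : v * exp (-v) ≤ 1 - exp (-v) := mul_expneg_le_one_sub v
        have h6 : exp (-1:ℝ) * exp 1 = 1 := by rw [← Real.exp_add]; norm_num
        have s2 : v * exp (-1:ℝ) ≤ 1 - exp (-v) :=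
          (mul_le_mul_of_nonneg_left he1 hv.le).trans h5
        calc v^3 = (exp 1 * exp (-1:ℝ)) * v^3 := by
              rw [mul_comm (exp 1), h6]; ring
          _ = exp 1 * v^2 * (v * exp (-1:ℝ)) := by ring
          _ ≤ exp 1 * v^2 * (1 - exp (-v)) :=
              mul_le_mul_of_nonneg_left s2 (by positivity)
          _ = exp 1 * (v^2 * (1 - exp (-v))) := by ring

lemma cc_abs_le_large {v : ℝ} (hv : 1 < v) :
    |cc v| ≤ (1/(1-exp (-1:ℝ)) + 1) * exp (-(1*v)) + v⁻¹^2 := by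
  have hv0 : (0:ℝ) < v := lt_trans one_pos hv
  set A := exp (-v) with hA
  have hA0 : 0 < A := exp_pos _
  have hA1 : 0 < 1 - A := one_sub_expneg_pos hv0
  have hE1 : 0 < 1 - exp (-1:ℝ) := one_sub_expneg_pos one_pos
  have hmono : 1 - exp (-1:ℝ) ≤ 1 - A := by
    have : A ≤ exp (-1:ℝ) := exp_le_exp.2 (by linarith)
    linarith
  have hrw : cc v = (A/(1-A) + A/2)/v - 1/v^2 := by
    rw [cc, ← hA]; have := hA1.ne'; field_simp; ring
  have hnum : 0 ≤ A/(1-A) + A/2 := by positivity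
  calc |cc v| ≤ |(A/(1-A) + A/2)/v| + |1/v^2| := by rw [hrw]; exact abs_sub _ _
    _ = (A/(1-A) + A/2)/v + 1/v^2 := by
        rw [abs_of_nonneg (by positivity), abs_of_nonneg (by positivity)]
    _ ≤ (A/(1-A) + A/2) + v⁻¹^2 := by
        apply _root_.add_le_add (div_le_self hnum hv.le)
        rw [one_div, ← inv_pow]
    _ ≤ (1/(1-exp (-1:ℝ)) + 1) * exp (-(1*v)) + v⁻¹^2 := by
        apply _root_.add_le_add _ le_rfl
        rw [one_mul, ← hA]
        have r1 : A/(1-A) ≤ A/(1-exp (-1:ℝ)) :=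
          div_le_div_of_nonneg_left hA0.le hE1 hmono
        have r2 : A/2 ≤ A := by linarith
        have : A/(1-exp (-1:ℝ)) = (1/(1-exp (-1:ℝ))) * A := by ring
        linarith [this ▸ r1]

lemma integrableOn_cc : IntegrableOn cc (Ioi 0) := by
  refine integrableOn_Ioi_zero contOn_cc (C := exp 1)
    (g := fun v => (1/(1-exp (-1:ℝ)) + 1) * exp (-(1*v)) + v⁻¹^2) ?_ ?_ ?_
  · exact fun v hv => cc_abs_le_small hv.1 hv.2
  · exact (integrableOn_expneg_mul one_pos _).add integrableOn_inv_sq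
  · exact fun v hv => cc_abs_le_large hv

lemma qq_abs_le {v : ℝ} (hv : 0 < v) : |qq v| ≤ 4 := by
  have hexp1 : exp (-1:ℝ) ≤ 1/2 := by
    rw [show (-1:ℝ) = -(1:ℝ) by norm_num, Real.exp_neg]
    rw [inv_le_comm₀ (exp_pos 1) (by norm_num)]
    have := Real.add_one_le_exp (1:ℝ); linarith
  have htail : |(1 - exp (-v))/(2*v)| ≤ 1/2 := by
    have h1 := one_sub_expneg_le v hv.le
    have h2 : 0 ≤ 1 - exp (-v) := (one_sub_expneg_pos hv).le
    rw [abs_of_nonneg (by positivity), div_le_iff₀ (by positivity)]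
    linarith
  have hqq : |qq v| ≤ |cc v| + 1/2 := by
    rw [qq]; exact (abs_add_le _ _).trans (by linarith)
  rcases le_or_gt v 1 with h | h
  · have := cc_abs_le_small hv h
    have he3 : exp 1 ≤ 3 := by
      have := Real.exp_one_lt_d9; linarith
    linarith
  · have := cc_abs_le_large h
    have hb : (1/(1-exp (-1:ℝ)) + 1) * exp (-(1*v)) + v⁻¹^2 ≤ 5/2 := by
      have hE1 : (1:ℝ)/2 ≤ 1 - exp (-1:ℝ) := by linarith
      have h1 : 1/(1-exp (-1:ℝ)) ≤ 2 := by
        rw [div_le_iff₀ (by linarith)]; linarith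
      have h2 : exp (-(1*v)) ≤ 1/2 := by
        rw [one_mul]
        exact (exp_le_exp.2 (by linarith)).trans hexp1
      have h3 : v⁻¹^2 ≤ 1 := by
        rw [← one_pow 2]
        apply pow_le_pow_left₀ (by positivity)
        rw [inv_le_one_iff₀]; right; linarith
      have h4 : 0 < exp (-(1*v)) := exp_pos _
      nlinarith
    linarith

def BB (x : ℝ) : ℝ := exp 1 * (x + x^2/2) + x

lemma BB_pos {x : ℝ} (hx : 0 < x) : 0 < BB x := by
  have := exp_pos (1:ℝ); rw [BB]; positivity

lemma rr_abs_le {x v : ℝ} (hx : 0 < x) (hv : 0 < v) : |rr x v| ≤ BB x := by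
  set E := exp (-v) with hE
  set X := exp (-(x*v)) with hX
  have hXE : exp (-((x+1)*v)) = X * E := by
    rw [hX, hE, ← Real.exp_add]; ring_nf
  have hE0 : 0 < E := exp_pos _
  have hX0 : 0 < X := exp_pos _
  have hX1 : X ≤ 1 := expneg_le_one _ (by positivity)
  have h1mE : 0 < 1 - E := one_sub_expneg_pos hv
  have hrw : rr x v = (E*(1-X) - x*(1-E))/((1-E)*v) := by
    rw [rr, hXE, ← hE]; have := h1mE.ne'; field_simp
  have hXle : 1 - X ≤ x*v := one_sub_expneg_le _ (by positivity)
  have hEv : v * E ≤ 1 - E := mul_expneg_le_one_sub v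
  have hupper : E*(1-X) - x*(1-E) ≤ 0 := by nlinarith
  have hBpos := BB_pos hx
  have hexp1 : 0 < exp 1 := exp_pos 1
  rcases le_or_gt v 1 with hv1 | hv1
  · -- small v
    have hXge : x*v - (x*v)^2/2 ≤ 1 - X := by
      have := expneg_le_one_sub_add (x*v) (by positivity); rw [← hX] at this; linarith
    have hEge : 1 - v ≤ E := one_sub_le_expneg v
    have h1mEle : 1 - E ≤ v := one_sub_expneg_le v hv.le
    have hstep : (1-v)*(x*v - (x*v)^2/2) ≤ E*(1-X) := by
      rcases le_or_gt 0 (x*v - (x*v)^2/2) with ht | ht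
      · calc (1-v)*(x*v - (x*v)^2/2) ≤ E*(x*v - (x*v)^2/2) :=
              mul_le_mul_of_nonneg_right hEge ht
          _ ≤ E*(1-X) := mul_le_mul_of_nonneg_left hXge hE0.le
      · have h1 : (1-v)*(x*v - (x*v)^2/2) ≤ 0 :=
          mul_nonpos_of_nonneg_of_nonpos (by linarith) ht.le
        exact h1.trans (mul_nonneg hE0.le (by linarith))
    have hlower : -( (x + x^2/2) * v^2) ≤ E*(1-X) - x*(1-E) := by nlinarith
    have habsN : |E*(1-X) - x*(1-E)| ≤ (x + x^2/2) * v^2 := by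
      rw [abs_le]; constructor <;> linarith
    have hden : v^2 * exp (-1:ℝ) ≤ (1-E)*v := by
      have he1 : exp (-1:ℝ) ≤ E := by rw [hE]; exact exp_le_exp.2 (by linarith)
      nlinarith [mul_le_mul_of_nonneg_left he1 hv.le, mul_expneg_le_one_sub v]
    have hdenpos : 0 < (1-E)*v := by positivity
    rw [hrw, abs_div, abs_of_pos hdenpos, div_le_iff₀ hdenpos]
    have h6 : exp (-1:ℝ) * exp 1 = 1 := by rw [← Real.exp_add]; norm_num
    have hxx : 0 ≤ x + x^2/2 := by positivity
    calc |E*(1-X) - x*(1-E)| ≤ (x + x^2/2) * v^2 := habsN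
      _ = exp 1 * (x + x^2/2) * (v^2 * exp (-1:ℝ)) := by
          rw [show exp 1 * (x + x^2/2) * (v^2 * exp (-1:ℝ))
            = (exp (-1:ℝ) * exp 1) * ((x + x^2/2) * v^2) by ring, h6, one_mul]
      _ ≤ exp 1 * (x + x^2/2) * ((1-E)*v) := by
          apply mul_le_mul_of_nonneg_left hden (by positivity)
      _ ≤ BB x * ((1-E)*v) := by
          apply mul_le_mul_of_nonneg_right _ hdenpos.le
          rw [BB]; linarith
  · -- large v
    have hlower : -(x*(1-E)) ≤ E*(1-X) - x*(1-E) := by nlinarith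
    have habsN : |E*(1-X) - x*(1-E)| ≤ x*(1-E) := by
      rw [abs_le]; constructor <;> nlinarith
    have hdenpos : 0 < (1-E)*v := by positivity
    rw [hrw, abs_div, abs_of_pos hdenpos, div_le_iff₀ hdenpos]
    calc |E*(1-X) - x*(1-E)| ≤ x*(1-E) := habsN
      _ ≤ x * ((1-E)*v) := by nlinarith [mul_pos hx h1mE]
      _ ≤ BB x * ((1-E)*v) := by
          apply mul_le_mul_of_nonneg_right _ hdenpos.le
          rw [BB]
          nlinarith [mul_pos hexp1 (show (0:ℝ) < x + x^2/2 by positivity)]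

lemma integrableOn_expneg_mul_rr {x c : ℝ} (hx : 0 < x) (hc : 0 < c) :
    IntegrableOn (fun v => exp (-(c*v)) * rr x v) (Ioi 0) := by
  refine integrableOn_Ioi_zero ?_ (C := BB x)
    (g := fun v => BB x * exp (-(c*v))) ?_ (integrableOn_expneg_mul hc _) ?_
  · exact (Continuous.continuousOn (by fun_prop)).mul (contOn_rr x)
  · intro v hv
    rw [abs_mul, abs_of_pos (exp_pos _)]
    calc exp (-(c*v)) * |rr x v| ≤ 1 * BB x := by
          apply mul_le_mul (expneg_le_one _ (mul_nonneg hc.le hv.1.le)) (rr_abs_le hx hv.1)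
            (abs_nonneg _) zero_le_one
      _ = BB x := one_mul _
  · intro v hv
    have hv0 : (0:ℝ) < v := lt_trans one_pos hv
    show |exp (-(c*v)) * rr x v| ≤ BB x * exp (-(c*v))
    rw [abs_mul, abs_of_pos (exp_pos _), mul_comm (BB x)]
    exact mul_le_mul_of_nonneg_left (rr_abs_le hx hv0) (exp_pos _).le

lemma abs_integral_expneg_mul_rr {x c : ℝ} (hx : 0 < x) (hc : 0 < c) :
    |∫ v in Ioi (0:ℝ), exp (-(c*v)) * rr x v| ≤ BB x / c := by
  have h1 : |∫ v in Ioi (0:ℝ), exp (-(c*v)) * rr x v|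
      ≤ ∫ v in Ioi (0:ℝ), |exp (-(c*v)) * rr x v| := by
    have h1 := norm_integral_le_integral_norm (μ := volume.restrict (Ioi 0))
      (fun v => exp (-(c*v)) * rr x v)
    simp only [Real.norm_eq_abs] at h1
    exact h1
  have h2 : ∫ v in Ioi (0:ℝ), |exp (-(c*v)) * rr x v|
      ≤ ∫ v in Ioi (0:ℝ), BB x * exp (-(c*v)) := by
    apply setIntegral_mono_on ((integrableOn_expneg_mul_rr hx hc).abs)
    · exact ((exp_neg_integrableOn_Ioi 0 hc).congr_fun
        (fun v _ => by simp [neg_mul]) measurableSet_Ioi).const_mul _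
    · exact measurableSet_Ioi
    · intro v hv
      rw [abs_mul, abs_of_pos (exp_pos _), mul_comm (BB x)]
      exact mul_le_mul_of_nonneg_left (rr_abs_le hx hv) (exp_pos _).le
  have h3 : ∫ v in Ioi (0:ℝ), BB x * exp (-(c*v)) = BB x / c := by
    rw [integral_const_mul, integral_expneg_mul hc]; ring
  linarith

lemma qq_identity {x v : ℝ} (hv : 0 < v) :
    exp (-(x*v)) * qq v = mal x v + cc v - (x-1/2)*fr x v - dd x v := by
  have h1 : (1:ℝ) - exp (-v) ≠ 0 := (one_sub_expneg_pos hv).ne'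
  rw [qq, cc, mal, fr, dd]
  field_simp
  ring

lemma gg_identity {x v : ℝ} (hv : 0 < v) :
    exp (-(x*v))/(v*(1 - exp (-v))) - v⁻¹^2 - (1/2-x)*exp (-(x*v))/v
      = mal x v + cc v - (x-1/2)*fr x v := by
  have h1 : (1:ℝ) - exp (-v) ≠ 0 := (one_sub_expneg_pos hv).ne'
  rw [cc, mal, fr]
  field_simp
  ring

def SS (x : ℝ) (n : ℕ) (v : ℝ) : ℝ :=
  x * fr n v + (∑ k ∈ Finset.range n, fr ((k:ℝ)+1) v)
    - ∑ m ∈ Finset.range (n+1), fr (x+(m:ℝ)) v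

lemma SS_identity {x v : ℝ} (hv : 0 < v) (n : ℕ) :
    SS x n v = mal x v + exp (-((n:ℝ)*v)) * rr x v := by
  set E := exp (-v) with hE
  set X := exp (-(x*v)) with hX
  have h1mE : (1:ℝ) - E ≠ 0 := (one_sub_expneg_pos hv).ne'
  have hEn : ∀ k:ℕ, exp (-((k:ℝ)*v)) = E^k := by
    intro k
    rw [show -((k:ℝ)*v) = (k:ℝ)*(-v) by ring, Real.exp_nat_mul]
  have h1 : ∀ k:ℕ, fr ((k:ℝ)+1) v = (E - E*E^k)/v := by
    intro k
    rw [fr, show -(((k:ℝ)+1)*v) = -v + (k:ℝ)*(-v) by ring, Real.exp_add,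
      Real.exp_nat_mul]
  have h2 : ∀ m:ℕ, fr (x+(m:ℝ)) v = (E - X*E^m)/v := by
    intro m
    rw [fr, show -((x+(m:ℝ))*v) = -(x*v) + (m:ℝ)*(-v) by ring, Real.exp_add,
      Real.exp_nat_mul]
  have hXE : exp (-((x+1)*v)) = X * E := by
    rw [hX, hE, ← Real.exp_add]; ring_nf
  set G : ℝ := ∑ k ∈ Finset.range n, E^k with hGdef
  have hG : G = (1 - E^n)/(1-E) := by
    rw [eq_div_iff h1mE]
    have := geom_sum_mul E n
    rw [hGdef]
    linear_combination -this
  have hsum1 : (∑ k ∈ Finset.range n, fr ((k:ℝ)+1) v) = ((n:ℝ)*E - E*G)/v := by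
    rw [Finset.sum_congr rfl (fun k _ => h1 k), ← Finset.sum_div]
    congr 1
    rw [Finset.sum_sub_distrib, Finset.sum_const, Finset.card_range, ← Finset.mul_sum,
      nsmul_eq_mul]
  have hsum2 : (∑ m ∈ Finset.range (n+1), fr (x+(m:ℝ)) v)
      = (((n:ℝ)+1)*E - X*(G + E^n))/v := by
    rw [Finset.sum_congr rfl (fun m _ => h2 m), ← Finset.sum_div]
    congr 1
    rw [Finset.sum_sub_distrib, Finset.sum_const, Finset.card_range, ← Finset.mul_sum,
      nsmul_eq_mul, Finset.sum_range_succ]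
    push_cast
    ring
  rw [SS, hsum1, hsum2, mal, rr, fr, hXE, hEn n, hG, ← hE, ← hX]
  field_simp
  ring

lemma integrableOn_SS {x : ℝ} (hx : 0 < x) {n : ℕ} (hn : 1 ≤ n) :
    IntegrableOn (SS x n) (Ioi 0) := by
  have hn0 : (0:ℝ) < n := by exact_mod_cast hn
  have hA : IntegrableOn (fun v => x * fr (n:ℝ) v) (Ioi 0) :=
    (integrableOn_fr hn0).const_mul x
  have hB : IntegrableOn (fun v => ∑ k ∈ Finset.range n, fr ((k:ℝ)+1) v) (Ioi 0) :=
    integrable_finset_sum _ (fun k _ => integrableOn_fr (by positivity : (0:ℝ) < (k:ℝ)+1))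
  have hC : IntegrableOn (fun v => ∑ m ∈ Finset.range (n+1), fr (x+(m:ℝ)) v) (Ioi 0) :=
    integrable_finset_sum _ (fun m _ => integrableOn_fr (by positivity : (0:ℝ) < x+(m:ℝ)))
  have hAB : IntegrableOn (fun v => x * fr (n:ℝ) v
      + ∑ k ∈ Finset.range n, fr ((k:ℝ)+1) v) (Ioi 0) := hA.add hB
  exact hAB.sub hC

lemma sum_log_factorial (n : ℕ) :
    ∑ k ∈ Finset.range n, Real.log ((k:ℝ)+1) = Real.log (n !) := by
  have hprod : ((n ! : ℕ):ℝ) = ∏ k ∈ Finset.range n, ((k:ℝ)+1) := by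
    rw [← Finset.prod_range_add_one_eq_factorial]
    push_cast
    rfl
  rw [hprod, Real.log_prod (fun k _ => by positivity)]

lemma integral_SS {x : ℝ} (hx : 0 < x) {n : ℕ} (hn : 1 ≤ n) :
    ∫ v in Ioi (0:ℝ), SS x n v = Real.BohrMollerup.logGammaSeq x n := by
  have hn0 : (0:ℝ) < n := by exact_mod_cast hn
  have hA : IntegrableOn (fun v => x * fr (n:ℝ) v) (Ioi 0) :=
    (integrableOn_fr hn0).const_mul x
  have hB : IntegrableOn (fun v => ∑ k ∈ Finset.range n, fr ((k:ℝ)+1) v) (Ioi 0) :=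
    integrable_finset_sum _ (fun k _ => integrableOn_fr (by positivity : (0:ℝ) < (k:ℝ)+1))
  have hC : IntegrableOn (fun v => ∑ m ∈ Finset.range (n+1), fr (x+(m:ℝ)) v) (Ioi 0) :=
    integrable_finset_sum _ (fun m _ => integrableOn_fr (by positivity : (0:ℝ) < x+(m:ℝ)))
  have hAB : IntegrableOn (fun v => x * fr (n:ℝ) v
      + ∑ k ∈ Finset.range n, fr ((k:ℝ)+1) v) (Ioi 0) := hA.add hB
  unfold SS
  have hsum1 : ∫ v in Ioi (0:ℝ), ∑ k ∈ Finset.range n, fr ((k:ℝ)+1) v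
      = ∑ k ∈ Finset.range n, ∫ v in Ioi (0:ℝ), fr ((k:ℝ)+1) v :=
    integral_finset_sum _ (fun k _ => integrableOn_fr (by positivity : (0:ℝ) < (k:ℝ)+1))
  have hsum2 : ∫ v in Ioi (0:ℝ), ∑ m ∈ Finset.range (n+1), fr (x+(m:ℝ)) v
      = ∑ m ∈ Finset.range (n+1), ∫ v in Ioi (0:ℝ), fr (x+(m:ℝ)) v :=
    integral_finset_sum _ (fun m _ => integrableOn_fr (by positivity : (0:ℝ) < x+(m:ℝ)))
  rw [integral_sub hAB hC, integral_add hA hB, integral_const_mul, hsum1, hsum2,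
    integral_fr hn0]
  have e1 : ∑ k ∈ Finset.range n, ∫ v in Ioi (0:ℝ), fr ((k:ℝ)+1) v
      = ∑ k ∈ Finset.range n, Real.log ((k:ℝ)+1) :=
    Finset.sum_congr rfl (fun k _ => integral_fr (by positivity : (0:ℝ) < (k:ℝ)+1))
  have e2 : ∑ m ∈ Finset.range (n+1), ∫ v in Ioi (0:ℝ), fr (x+(m:ℝ)) v
      = ∑ m ∈ Finset.range (n+1), Real.log (x+(m:ℝ)) :=
    Finset.sum_congr rfl (fun m _ => integral_fr (by positivity : (0:ℝ) < x+(m:ℝ)))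
  rw [e1, e2, sum_log_factorial]
  rfl

lemma integrableOn_mal {x : ℝ} (hx : 0 < x) : IntegrableOn (mal x) (Ioi 0) := by
  have h1 : IntegrableOn (fun v => SS x 1 v - exp (-((1:ℝ)*v)) * rr x v) (Ioi 0) :=
    (integrableOn_SS hx le_rfl).sub (integrableOn_expneg_mul_rr hx one_pos)
  apply h1.congr_fun _ measurableSet_Ioi
  intro v hv
  have h2 := SS_identity (x := x) hv 1
  simp only [Nat.cast_one] at h2
  show SS x 1 v - exp (-((1:ℝ)*v)) * rr x v = mal x v
  rw [h2]
  ring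

lemma integral_mal {x : ℝ} (hx : 0 < x) :
    ∫ v in Ioi (0:ℝ), mal x v = Real.log (Real.Gamma x) := by
  have key : ∀ n : ℕ, 1 ≤ n →
      Real.BohrMollerup.logGammaSeq x n - ∫ v in Ioi (0:ℝ), mal x v
        = ∫ v in Ioi (0:ℝ), exp (-((n:ℝ)*v)) * rr x v := by
    intro n hn
    have hn0 : (0:ℝ) < n := by exact_mod_cast hn
    rw [← integral_SS hx hn]
    rw [show (∫ v in Ioi (0:ℝ), SS x n v)
        = ∫ v in Ioi (0:ℝ), (mal x v + exp (-((n:ℝ)*v)) * rr x v) from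
      setIntegral_congr_fun measurableSet_Ioi (fun v hv => SS_identity hv n)]
    rw [integral_add (integrableOn_mal hx) (integrableOn_expneg_mul_rr hx hn0)]
    ring
  have h2 : Tendsto (fun n : ℕ => Real.BohrMollerup.logGammaSeq x n) atTop
      (𝓝 (∫ v in Ioi (0:ℝ), mal x v)) := by
    rw [tendsto_iff_dist_tendsto_zero]
    apply squeeze_zero' (Eventually.of_forall (fun n => dist_nonneg))
      (g := fun n : ℕ => BB x / n)
    · filter_upwards [eventually_ge_atTop 1] with n hn
      rw [Real.dist_eq, key n hn]
      exact abs_integral_expneg_mul_rr hx (by exact_mod_cast hn)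
    · exact tendsto_const_div_atTop_nhds_zero_nat _
  exact tendsto_nhds_unique h2 (Real.BohrMollerup.tendsto_log_gamma hx)

def JJ : ℝ := ∫ v in Ioi (0:ℝ), cc v

lemma expneg_mul_qq_abs_le {x v : ℝ} (hx : 0 < x) (hv : 0 < v) :
    |exp (-(x*v)) * qq v| ≤ 4 * exp (-(min x 1 * v)) := by
  rw [abs_mul, abs_of_pos (exp_pos _), mul_comm (4:ℝ)]
  apply mul_le_mul _ (qq_abs_le hv) (abs_nonneg _) (exp_pos _).le
  apply exp_le_exp.2
  have : min x 1 ≤ x := min_le_left _ _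
  nlinarith [min_le_right x 1, lt_min hx one_pos]

lemma integrableOn_expneg_mul_qq {x : ℝ} (hx : 0 < x) :
    IntegrableOn (fun v => exp (-(x*v)) * qq v) (Ioi 0) := by
  refine integrableOn_Ioi_zero ((Continuous.continuousOn (by fun_prop)).mul contOn_qq)
    (C := 4) ?_ (integrableOn_expneg_mul (lt_min hx one_pos) 4) ?_
  · intro v hv
    rw [abs_mul, abs_of_pos (exp_pos _)]
    calc exp (-(x*v)) * |qq v| ≤ 1 * 4 :=
          mul_le_mul (expneg_le_one _ (mul_nonneg hx.le hv.1.le)) (qq_abs_le hv.1) (abs_nonneg _) zero_le_one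
      _ = 4 := one_mul _
  · intro v hv
    have hv0 : (0:ℝ) < v := lt_trans one_pos hv
    exact (expneg_mul_qq_abs_le hx hv0).trans_eq rfl

lemma mu_eq {x : ℝ} (hx : 0 < x) :
    ∫ v in Ioi (0:ℝ), exp (-(x*v)) * qq v
      = Real.log (Real.Gamma x) + JJ - (x-1/2)*Real.log x + x := by
  have h1 : IntegrableOn (fun v => mal x v + cc v) (Ioi 0) :=
    (integrableOn_mal hx).add integrableOn_cc
  have h2 : IntegrableOn (fun v => (x-1/2) * fr x v) (Ioi 0) :=
    (integrableOn_fr hx).const_mul _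
  have h3 : IntegrableOn (fun v => mal x v + cc v - (x-1/2) * fr x v) (Ioi 0) := h1.sub h2
  have step : ∫ v in Ioi (0:ℝ), exp (-(x*v)) * qq v
      = ∫ v in Ioi (0:ℝ), (mal x v + cc v - (x-1/2)*fr x v - dd x v) :=
    setIntegral_congr_fun measurableSet_Ioi (fun v hv => qq_identity hv)
  rw [step, integral_sub h3 (integrableOn_dd hx), integral_sub h1 h2,
    integral_add (integrableOn_mal hx) integrableOn_cc, integral_const_mul,
    integral_mal hx, integral_fr hx, integral_dd hx]
  rw [JJ]
  ring

lemma tendsto_mu_succ_zero :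
    Tendsto (fun n : ℕ => ∫ v in Ioi (0:ℝ), exp (-(((n:ℝ)+1)*v)) * qq v) atTop (𝓝 0) := by
  have key := MeasureTheory.tendsto_integral_of_dominated_convergence
    (μ := volume.restrict (Ioi 0))
    (F := fun (n : ℕ) v => exp (-(((n:ℝ)+1)*v)) * qq v) (f := fun _ => (0:ℝ))
    (bound := fun v => 4 * exp (-(1*v)))
    (fun n => (Continuous.continuousOn (by fun_prop)).mul contOn_qq
      |>.aestronglyMeasurable measurableSet_Ioi)
    ?_ ?_ ?_
  · simpa using key
  · have : IntegrableOn (fun v : ℝ => 4 * exp (-(1*v))) (Ioi 0) := by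
      apply Integrable.const_mul
      exact (exp_neg_integrableOn_Ioi 0 one_pos).congr_fun (fun v _ => by simp [neg_mul])
        measurableSet_Ioi
    exact this
  · intro n
    rw [ae_restrict_iff' measurableSet_Ioi]
    apply ae_of_all
    intro v hv
    have hv0 : (0:ℝ) < v := hv
    rw [Real.norm_eq_abs]
    have h := expneg_mul_qq_abs_le (x := (n:ℝ)+1) (by positivity) hv0
    have hmin : min ((n:ℝ)+1) 1 = 1 := min_eq_right (by push_cast; linarith [Nat.cast_nonneg (α := ℝ) n])
    rwa [hmin] at h
  · rw [ae_restrict_iff' measurableSet_Ioi]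
    apply ae_of_all
    intro v hv
    have hv0 : (0:ℝ) < v := hv
    have hlt : exp (-v) < 1 := by
      rw [exp_lt_one_iff]; linarith
    have h := (tendsto_pow_atTop_nhds_zero_of_lt_one (exp_pos (-v)).le hlt).comp
      (tendsto_add_atTop_nat 1)
    have h2 := h.mul_const (qq v)
    rw [zero_mul] at h2
    apply h2.congr
    intro n
    simp only [Function.comp_apply]
    congr 1
    rw [show -(((n:ℝ)+1)*v) = ((n+1:ℕ):ℝ)*(-v) by push_cast; ring, Real.exp_nat_mul]

lemma tendsto_log_succ_sub : Tendsto (fun n : ℕ => Real.log ((n:ℝ)+1) - Real.log n)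
    atTop (𝓝 0) := by
  have h1 : Tendsto (fun n : ℕ => 1 + 1/(n:ℝ)) atTop (𝓝 1) := by
    have := tendsto_one_div_atTop_nhds_zero_nat (𝕜 := ℝ)
    simpa using (tendsto_const_nhds (x := (1:ℝ))).add this
  have h2 : Tendsto (fun n : ℕ => Real.log (1 + 1/(n:ℝ))) atTop (𝓝 0) := by
    have hc : ContinuousAt Real.log 1 := Real.continuousAt_log one_ne_zero
    have := (hc.tendsto.comp h1)
    simpa [Function.comp_def] using this
  apply h2.congr'
  filter_upwards [eventually_gt_atTop 0] with n hn
  have hn0 : (0:ℝ) < n := by exact_mod_cast hn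
  rw [show (1:ℝ) + 1/(n:ℝ) = ((n:ℝ)+1)/n by field_simp, Real.log_div (by positivity) hn0.ne']

lemma tendsto_n_mul_log : Tendsto (fun n : ℕ => (n:ℝ) * (Real.log ((n:ℝ)+1) - Real.log n))
    atTop (𝓝 1) := by
  have h0 := Real.tendsto_one_add_div_pow_exp (1:ℝ)
  have hc : ContinuousAt Real.log (exp 1) := Real.continuousAt_log (exp_pos 1).ne'
  have h1 := hc.tendsto.comp h0
  rw [Real.log_exp] at h1
  apply h1.congr'
  filter_upwards [eventually_gt_atTop 0] with n hn
  have hn0 : (0:ℝ) < n := by exact_mod_cast hn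
  have hpos : (0:ℝ) < 1 + 1/(n:ℝ) := by positivity
  simp only [Function.comp_apply]
  rw [Real.log_pow, show (1:ℝ) + 1/(n:ℝ) = ((n:ℝ)+1)/n by field_simp,
    Real.log_div (by positivity) hn0.ne']

lemma JJ_eq : JJ = -(1/2) * Real.log (2*π) := by
  -- μ(n+1) = log n! + JJ - (n+1/2) log (n+1) + (n+1)
  have hmu : ∀ n : ℕ, ∫ v in Ioi (0:ℝ), exp (-(((n:ℝ)+1)*v)) * qq v
      = Real.log (n !) + JJ - ((n:ℝ)+1/2)*Real.log ((n:ℝ)+1) + ((n:ℝ)+1) := by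
    intro n
    have h := mu_eq (x := (n:ℝ)+1) (by positivity)
    rw [h, Real.Gamma_nat_eq_factorial]
    ring
  -- the Stirling-side limit
  have hstir : Tendsto (fun n : ℕ =>
      Real.log (n !) + JJ - ((n:ℝ)+1/2)*Real.log ((n:ℝ)+1) + ((n:ℝ)+1)) atTop
      (𝓝 (1/2*Real.log π + 1/2*Real.log 2 + 1 - 0/2 - 1 + JJ)) := by
    have hL : Tendsto (fun n : ℕ => Real.log (Stirling.stirlingSeq n)) atTop
        (𝓝 (Real.log (Real.sqrt π))) := by
      have hc : ContinuousAt Real.log (Real.sqrt π) :=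
        Real.continuousAt_log (by positivity)
      exact hc.tendsto.comp Stirling.tendsto_stirlingSeq_sqrt_pi
    have hlog_sqrt : Real.log (Real.sqrt π) = 1/2 * Real.log π := by
      rw [Real.log_sqrt pi_pos.le]; ring
    rw [hlog_sqrt] at hL
    have hcomb : Tendsto (fun n : ℕ =>
        Real.log (Stirling.stirlingSeq n) + 1/2*Real.log 2 + 1
          - (Real.log ((n:ℝ)+1) - Real.log n)/2
          - (n:ℝ)*(Real.log ((n:ℝ)+1) - Real.log n) + JJ) atTop
        (𝓝 (1/2*Real.log π + 1/2*Real.log 2 + 1 - 0/2 - 1 + JJ)) := by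
      apply Tendsto.add_const
      apply Tendsto.sub _ tendsto_n_mul_log
      apply Tendsto.sub _ (tendsto_log_succ_sub.div_const 2)
      apply Tendsto.add_const
      exact hL.add_const _
    apply hcomb.congr'
    filter_upwards [eventually_gt_atTop 0] with n hn
    have hn0 : (0:ℝ) < n := by exact_mod_cast hn
    have hfact := Stirling.log_stirlingSeq_formula n
    have hlog2n : Real.log (2*(n:ℝ)) = Real.log 2 + Real.log n :=
      Real.log_mul two_ne_zero hn0.ne'
    have hlogne : Real.log ((n:ℝ)/exp 1) = Real.log n - 1 := by
      rw [Real.log_div hn0.ne' (exp_pos 1).ne', Real.log_exp]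
    rw [hfact, hlog2n, hlogne]
    ring
  have := tendsto_nhds_unique (hstir.congr (fun n => (hmu n).symm)) tendsto_mu_succ_zero
  have hlog2pi : Real.log (2*π) = Real.log 2 + Real.log π :=
    Real.log_mul two_ne_zero pi_pos.ne'
  rw [hlog2pi]
  linarith

lemma integral_gg {x : ℝ} (hx : 0 < x) :
    ∫ v in Ioi (0:ℝ), (exp (-(x*v))/(v*(1 - exp (-v))) - v⁻¹^2 - (1/2-x)*exp (-(x*v))/v)
      = Real.log (Real.Gamma x) + (1/2 - x)*Real.log x - (1/2)*Real.log (2*π) := by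
  have h1 : IntegrableOn (fun v => mal x v + cc v) (Ioi 0) :=
    (integrableOn_mal hx).add integrableOn_cc
  have h2 : IntegrableOn (fun v => (x-1/2) * fr x v) (Ioi 0) :=
    (integrableOn_fr hx).const_mul _
  rw [setIntegral_congr_fun measurableSet_Ioi (fun v hv => gg_identity (x := x) hv)]
  rw [integral_sub h1 h2, integral_add (integrableOn_mal hx) integrableOn_cc,
    integral_const_mul, integral_mal hx, integral_fr hx]
  rw [show (∫ v in Ioi (0:ℝ), cc v) = JJ from rfl, JJ_eq]
  ring

end BinetAux

open BinetAux in
/-- Binet-type integral: for reals `0 < a ≤ p`,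
`∫₀^∞ (e^{-u}/(u(1-e^{-pu/a})) - (a/p)u⁻² - (1/2 - a/p)e^{-u}/u) du
  = log Γ(a/p) + (1/2 - a/p) log(a/p) - (1/2) log(2π)`. -/
theorem binet_type_integral (a p : ℝ) (ha : 0 < a) (hap : a ≤ p) :
    ∫ u in Set.Ioi (0 : ℝ),
        (Real.exp (-u) / (u * (1 - Real.exp (-p * u / a))) - (a / p) * u⁻¹ ^ 2 -
          (1 / 2 - a / p) * Real.exp (-u) / u) =
      Real.log (Real.Gamma (a / p)) + (1 / 2 - a / p) * Real.log (a / p) -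
        (1 / 2) * Real.log (2 * Real.pi) := by
  have hp : 0 < p := lt_of_lt_of_le ha hap
  set x := a / p with hx_def
  have hx : 0 < x := div_pos ha hp
  set ff : ℝ → ℝ := fun u =>
    Real.exp (-u) / (u * (1 - Real.exp (-p * u / a))) - (a / p) * u⁻¹ ^ 2 -
      (1 / 2 - a / p) * Real.exp (-u) / u with hff
  have hcomp : ∀ v ∈ Ioi (0:ℝ), ff (x * v)
      = x⁻¹ * (exp (-(x*v))/(v*(1 - exp (-v))) - v⁻¹^2 - (1/2-x)*exp (-(x*v))/v) := by
    intro v hv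
    have hv0 : (0:ℝ) < v := hv
    have harg : -p * (x*v) / a = -v := by
      rw [hx_def]; field_simp
    have hxv : -(x*v) = -(x*v) := rfl
    rw [hff]
    simp only [harg, ← hx_def]
    have h1mE : (1:ℝ) - exp (-v) ≠ 0 := (one_sub_expneg_pos hv0).ne'
    have hxv0 : x * v ≠ 0 := by positivity
    rw [show -(x*v) = -(x*v) from rfl]
    field_simp
  have hsub := integral_comp_mul_left_Ioi ff 0 hx
  rw [mul_zero] at hsub
  have key : ∫ u in Ioi (0:ℝ), ff u = x * ∫ v in Ioi (0:ℝ), ff (x * v) := by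
    rw [hsub, smul_eq_mul, ← mul_assoc, mul_inv_cancel₀ hx.ne', one_mul]
  rw [key, setIntegral_congr_fun measurableSet_Ioi hcomp, integral_const_mul,
    ← mul_assoc, mul_inv_cancel₀ hx.ne', one_mul, integral_gg hx]
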